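/- For the symmetric two-component Gaussian mixture P_θ = (1/2)N(−θ, I_d) + (1/2)N(θ, I_d) on ℝ^d, the chi-squared divergence satisfies χ²(P_θ ‖ N(0, I_d)) = cosh(‖θ‖²) − 1, and consequently KL(P_θ ‖ N(0, I_d)) ≤ log cosh(‖θ‖²). -/

import Mathlib

open MeasureTheory ProbabilityTheory
open scoped ENNReal

/-- The standard Gaussian measure `N(0, I_d)` on `ℝ^d`. -/
noncomputable def stdGaussianPi (d : ℕ) : Measure (Fin d → ℝ) :=
  Measure.pi fun _ => gaussianReal 0 1

/-- The symmetric mixture `(1/2)N(−θ, I_d) + (1/2)N(θ, I_d)` on `ℝ^d`. -/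
noncomputable def mixGPi (d : ℕ) (θ : Fin d → ℝ) : Measure (Fin d → ℝ) :=
  (1 / 2 : ℝ≥0∞) • (stdGaussianPi d).map (fun z => z - θ) +
    (1 / 2 : ℝ≥0∞) • (stdGaussianPi d).map (fun z => z + θ)

/-- Chi-squared divergence `χ²(P‖Q) = ∫ (dP/dQ)² dQ − 1`. -/
noncomputable def chiSqDiv {d : ℕ} (P Q : Measure (Fin d → ℝ)) : ℝ :=
  (∫ x, (P.rnDeriv Q x).toReal ^ 2 ∂Q) - 1

/-- KL divergence `KL(P‖Q) = ∫ log(dP/dQ) dP`. -/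
noncomputable def klDivR {d : ℕ} (P Q : Measure (Fin d → ℝ)) : ℝ :=
  ∫ x, Real.log (P.rnDeriv Q x).toReal ∂P

/-! ### Auxiliary lemmas -/

open scoped NNReal

section Aux

/-- Fubini for lower integrals of products over a finite product of measures on `ℝ`. -/
theorem aux_lintegral_pi_prod {n : ℕ} (μ : Fin n → Measure ℝ) [∀ i, SigmaFinite (μ i)]
    (f : Fin n → ℝ → ℝ≥0∞) (hf : ∀ i, Measurable (f i)) :
    ∫⁻ x, ∏ i, f i (x i) ∂Measure.pi μ = ∏ i, ∫⁻ t, f i t ∂μ i := by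
  induction n with
  | zero => simp [lintegral_const, Measure.pi_univ]
  | succ n ih =>
    have mp := (measurePreserving_piFinSuccAbove μ 0).symm
    calc
      _ = ∫⁻ y : ℝ × (Fin n → ℝ), f 0 y.1 * ∏ i : Fin n, f i.succ (y.2 i)
          ∂((μ 0).prod (Measure.pi fun i => μ i.succ)) := by
        rw [← mp.map_eq, lintegral_map_equiv]
        congr 1
        ext y
        simp [MeasurableEquiv.piFinSuccAbove_symm_apply, Fin.insertNthEquiv,
          Fin.prod_univ_succ, Fin.insertNth_zero, Equiv.coe_fn_mk, Fin.cons_succ,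
          Fin.zero_succAbove, Fin.cons_zero]
      _ = (∫⁻ t, f 0 t ∂μ 0) * ∏ i : Fin n, ∫⁻ t, f i.succ t ∂μ i.succ := by
        rw [lintegral_prod_mul (f := f 0) (g := fun y : Fin n → ℝ => ∏ i : Fin n, f i.succ (y i))
          (hf 0).aemeasurable
          (Finset.measurable_prod _ fun i _ =>
            (hf i.succ).comp (measurable_pi_apply i)).aemeasurable]
        rw [ih _ _ fun i => hf i.succ]
      _ = _ := by rw [Fin.prod_univ_succ]

lemma aux_gaussianPDFReal_mul_exp (m x : ℝ) :
    gaussianPDFReal 0 1 x * Real.exp (m * x - m ^ 2 / 2) = gaussianPDFReal m 1 x := by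
  simp only [gaussianPDFReal, NNReal.coe_one, mul_one, sub_zero]
  rw [mul_assoc, ← Real.exp_add]
  congr 2
  ring

lemma aux_measurable_expfactor (m : ℝ) :
    Measurable (fun x : ℝ => ENNReal.ofReal (Real.exp (m * x - m ^ 2 / 2))) := by
  fun_prop

lemma aux_gaussianReal_eq_withDensity (m : ℝ) :
    gaussianReal m 1 = (gaussianReal 0 1).withDensity
      (fun x => ENNReal.ofReal (Real.exp (m * x - m ^ 2 / 2))) := by
  rw [gaussianReal_of_var_ne_zero _ one_ne_zero, gaussianReal_of_var_ne_zero _ one_ne_zero,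
    ← withDensity_mul _ (measurable_gaussianPDF 0 1) (aux_measurable_expfactor m)]
  congr 1
  funext x
  simp only [Pi.mul_apply, gaussianPDF_def]
  rw [← ENNReal.ofReal_mul (gaussianPDFReal_nonneg 0 1 x), aux_gaussianPDFReal_mul_exp]

lemma aux_pdf_smul_eq (a : ℝ) :
    (fun x => (Real.toNNReal (gaussianPDFReal 0 1 x)) • Real.exp (a * x))
      = fun x => Real.exp (a ^ 2 / 2) * gaussianPDFReal a 1 x := by
  funext x
  rw [NNReal.smul_def, smul_eq_mul, Real.coe_toNNReal _ (gaussianPDFReal_nonneg 0 1 x),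
    ← aux_gaussianPDFReal_mul_exp a x]
  rw [mul_left_comm, ← Real.exp_add]
  congr 2
  ring

lemma aux_integrable_exp_mul_gaussian (a : ℝ) :
    Integrable (fun x => Real.exp (a * x)) (gaussianReal 0 1) := by
  rw [gaussianReal_of_var_ne_zero _ one_ne_zero]
  have h : gaussianPDF 0 1 = fun x => ((Real.toNNReal (gaussianPDFReal 0 1 x) : ℝ≥0) : ℝ≥0∞) :=
    rfl
  rw [h, integrable_withDensity_iff_integrable_smul
    ((measurable_gaussianPDFReal 0 1).real_toNNReal), aux_pdf_smul_eq]
  exact (integrable_gaussianPDFReal a 1).const_mul _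

lemma aux_integral_exp_mul_gaussian (a : ℝ) :
    ∫ x, Real.exp (a * x) ∂gaussianReal 0 1 = Real.exp (a ^ 2 / 2) := by
  rw [gaussianReal_of_var_ne_zero _ one_ne_zero]
  have h : gaussianPDF 0 1 = fun x => ((Real.toNNReal (gaussianPDFReal 0 1 x) : ℝ≥0) : ℝ≥0∞) :=
    rfl
  rw [h, integral_withDensity_eq_integral_smul
    ((measurable_gaussianPDFReal 0 1).real_toNNReal), aux_pdf_smul_eq,
    integral_const_mul, integral_gaussianPDFReal_eq_one a one_ne_zero, mul_one]

/-- Step A : the translated standard Gaussian is a product of shifted Gaussians. -/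
lemma aux_stdGaussianPi_map_add (d : ℕ) (c : Fin d → ℝ) :
    (stdGaussianPi d).map (fun z => z + c) = Measure.pi (fun i => gaussianReal (c i) 1) := by
  refine (Measure.pi_eq fun s hs => ?_).symm
  have hm : Measurable (fun z : Fin d → ℝ => z + c) :=
    measurable_pi_lambda _ fun i => (measurable_pi_apply (X := fun _ : Fin d => ℝ) i).add_const (c i)
  rw [Measure.map_apply hm (MeasurableSet.univ_pi hs)]
  have hpre : (fun z : Fin d → ℝ => z + c) ⁻¹' (Set.pi Set.univ s)
      = Set.pi Set.univ (fun i => (fun t : ℝ => t + c i) ⁻¹' s i) := by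
    ext z
    simp [Set.mem_pi]
  rw [hpre, stdGaussianPi, Measure.pi_pi]
  refine Finset.prod_congr rfl fun i _ => ?_
  rw [← Measure.map_apply (measurable_add_const (c i)) (hs i), gaussianReal_map_add_const,
    zero_add]

/-- Step B : a product of shifted Gaussians has a density w.r.t. the standard Gaussian. -/
lemma aux_pi_gaussian_eq_withDensity (d : ℕ) (c : Fin d → ℝ) :
    Measure.pi (fun i => gaussianReal (c i) 1) = (stdGaussianPi d).withDensity
      (fun x => ∏ i, ENNReal.ofReal (Real.exp (c i * x i - c i ^ 2 / 2))) := by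
  refine Measure.pi_eq fun s hs => ?_
  rw [withDensity_apply _ (MeasurableSet.univ_pi hs),
    ← lintegral_indicator (MeasurableSet.univ_pi hs) _]
  have hind : ∀ x : Fin d → ℝ, (Set.pi Set.univ s).indicator
      (fun x => ∏ i, ENNReal.ofReal (Real.exp (c i * x i - c i ^ 2 / 2))) x
      = ∏ i, (s i).indicator (fun t => ENNReal.ofReal (Real.exp (c i * t - c i ^ 2 / 2))) (x i) := by
    intro x
    by_cases hx : x ∈ Set.pi Set.univ s
    · rw [Set.indicator_of_mem hx]
      exact (Finset.prod_congr rfl fun i _ =>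
        (Set.indicator_of_mem (hx i (Set.mem_univ i))
          (fun t => ENNReal.ofReal (Real.exp (c i * t - c i ^ 2 / 2)))).symm)
    · rw [Set.indicator_of_notMem hx]
      rw [Set.mem_pi] at hx
      push_neg at hx
      obtain ⟨i, -, hi⟩ := hx
      exact (Finset.prod_eq_zero (Finset.mem_univ i) (Set.indicator_of_notMem hi _)).symm
  simp_rw [hind]
  rw [stdGaussianPi, aux_lintegral_pi_prod _ _
    (fun i => (aux_measurable_expfactor (c i)).indicator (hs i))]
  refine (Finset.prod_congr rfl fun i _ => ?_).symm
  rw [lintegral_indicator (hs i) _, ← withDensity_apply _ (hs i),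
    ← aux_gaussianReal_eq_withDensity]

lemma aux_prod_ofReal_exp (d : ℕ) (c x : Fin d → ℝ) :
    ∏ i, ENNReal.ofReal (Real.exp (c i * x i - c i ^ 2 / 2))
      = ENNReal.ofReal (Real.exp ((∑ i, c i * x i) - (∑ i, c i ^ 2) / 2)) := by
  rw [← ENNReal.ofReal_prod_of_nonneg (fun i _ => (Real.exp_pos _).le), ← Real.exp_sum,
    Finset.sum_sub_distrib, ← Finset.sum_div]

lemma aux_measurable_mixDensity (d : ℕ) (θ : Fin d → ℝ) :
    Measurable (fun x : Fin d → ℝ =>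
      ENNReal.ofReal (Real.exp (-(∑ i, θ i ^ 2) / 2) * Real.cosh (∑ i, θ i * x i))) := by
  have h : Measurable fun x : Fin d → ℝ => ∑ i, θ i * x i :=
    Finset.measurable_sum _ fun i _ => (measurable_pi_apply (X := fun _ : Fin d => ℝ) i).const_mul (θ i)
  fun_prop

lemma aux_ofReal_half : ENNReal.ofReal (1 / 2 : ℝ) = (1 / 2 : ℝ≥0∞) := by
  rw [ENNReal.ofReal_div_of_pos two_pos, ENNReal.ofReal_one, ENNReal.ofReal_ofNat]

/-- The mixture has density `exp(−‖θ‖²/2) cosh(⟨θ, x⟩)` w.r.t. the standard Gaussian. -/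
lemma aux_mixGPi_eq_withDensity (d : ℕ) (θ : Fin d → ℝ) :
    mixGPi d θ = (stdGaussianPi d).withDensity
      (fun x => ENNReal.ofReal
        (Real.exp (-(∑ i, θ i ^ 2) / 2) * Real.cosh (∑ i, θ i * x i))) := by
  have hsub : (fun z : Fin d → ℝ => z - θ) = fun z => z + (-θ) := by
    funext z; rw [sub_eq_add_neg]
  have hmeas : ∀ c : Fin d → ℝ, Measurable (fun x : Fin d → ℝ =>
      ∏ i, ENNReal.ofReal (Real.exp (c i * x i - c i ^ 2 / 2))) :=
    fun c => Finset.measurable_prod _ fun i _ =>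
      ENNReal.measurable_ofReal.comp (Real.measurable_exp.comp
        (((measurable_pi_apply (X := fun _ : Fin d => ℝ) i).const_mul (c i)).sub measurable_const))
  rw [mixGPi, hsub, aux_stdGaussianPi_map_add, aux_stdGaussianPi_map_add,
    aux_pi_gaussian_eq_withDensity, aux_pi_gaussian_eq_withDensity,
    ← withDensity_smul _ (hmeas _), ← withDensity_smul _ (hmeas _),
    ← withDensity_add_right _ ((hmeas θ).const_smul _)]
  congr 1
  funext x
  simp only [Pi.add_apply, Pi.smul_apply, smul_eq_mul]
  rw [aux_prod_ofReal_exp, aux_prod_ofReal_exp]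
  have hsq : ∑ i, (-θ) i ^ 2 = ∑ i, θ i ^ 2 := by simp
  have hlin : ∑ i, (-θ) i * x i = -∑ i, θ i * x i := by
    rw [← Finset.sum_neg_distrib]; exact Finset.sum_congr rfl fun i _ => by simp
  rw [hsq, hlin]
  set u := ∑ i, θ i * x i
  set t := ∑ i, θ i ^ 2
  have hr : Real.exp (-t / 2) * Real.cosh u
      = 1 / 2 * Real.exp (-u - t / 2) + 1 / 2 * Real.exp (u - t / 2) := by
    rw [Real.cosh_eq, show (-u - t / 2 : ℝ) = -u + -t / 2 by ring,
      show (u - t / 2 : ℝ) = u + -t / 2 by ring, Real.exp_add, Real.exp_add]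
    ring
  rw [hr, ENNReal.ofReal_add (by positivity) (by positivity),
    ENNReal.ofReal_mul (by norm_num), ENNReal.ofReal_mul (by norm_num), aux_ofReal_half]

section mgf

noncomputable local instance auxMsG : MeasureSpace ℝ := ⟨gaussianReal 0 1⟩

local instance : IsProbabilityMeasure (volume : Measure ℝ) :=
  inferInstanceAs (IsProbabilityMeasure (gaussianReal 0 1))

lemma aux_integral_exp_sum_pi (d : ℕ) (c : Fin d → ℝ) :
    ∫ x, Real.exp (∑ i, c i * x i) ∂stdGaussianPi d
      = Real.exp ((∑ i, c i ^ 2) / 2) := by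
  have h : ∀ x : Fin d → ℝ, Real.exp (∑ i, c i * x i) = ∏ i, Real.exp (c i * x i) :=
    fun x => Real.exp_sum _ _
  simp_rw [h]
  have := MeasureTheory.integral_fintype_prod_eq_prod (𝕜 := ℝ) (ι := Fin d)
    (E := fun _ => ℝ) (μ := fun _ => (volume : Measure ℝ)) (fun i t => Real.exp (c i * t))
  rw [show stdGaussianPi d = Measure.pi fun _ : Fin d => (volume : Measure ℝ) from rfl, this]
  simp_rw [show (volume : Measure ℝ) = gaussianReal 0 1 from rfl,
    aux_integral_exp_mul_gaussian, ← Real.exp_sum, Finset.sum_div]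

lemma aux_integrable_exp_sum_pi (d : ℕ) (c : Fin d → ℝ) :
    Integrable (fun x => Real.exp (∑ i, c i * x i)) (stdGaussianPi d) := by
  have h : ∀ x : Fin d → ℝ, Real.exp (∑ i, c i * x i) = ∏ i, Real.exp (c i * x i) :=
    fun x => Real.exp_sum _ _
  simp_rw [h]
  exact MeasureTheory.Integrable.fintype_prod (𝕜 := ℝ) (E := ℝ)
    (f := fun (i : Fin d) t => Real.exp (c i * t))
    (fun i => aux_integrable_exp_mul_gaussian (c i))

end mgf

end Aux

/-- `χ²(P_θ ‖ N(0, I_d)) = cosh(‖θ‖²) − 1` and, consequently,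
`KL(P_θ ‖ N(0, I_d)) ≤ log cosh(‖θ‖²)`. -/
theorem stmt_16 (d : ℕ) (θ : Fin d → ℝ) :
    chiSqDiv (mixGPi d θ) (stdGaussianPi d) = Real.cosh (∑ i, θ i ^ 2) - 1 ∧
    klDivR (mixGPi d θ) (stdGaussianPi d) ≤ Real.log (Real.cosh (∑ i, θ i ^ 2)) := by
  haveI hQprob : IsProbabilityMeasure (stdGaussianPi d) :=
    inferInstanceAs (IsProbabilityMeasure (Measure.pi fun _ : Fin d => gaussianReal 0 1))
  set t : ℝ := ∑ i, θ i ^ 2 with ht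
  set u : (Fin d → ℝ) → ℝ := fun x => ∑ i, θ i * x i with hu
  set f : (Fin d → ℝ) → ℝ := fun x => Real.exp (-t / 2) * Real.cosh (u x) with hf
  have hfpos : ∀ x, 0 < f x := fun x => mul_pos (Real.exp_pos _) (Real.cosh_pos _)
  have humeas : Measurable u :=
    Finset.measurable_sum _ fun i _ => (measurable_pi_apply (X := fun _ : Fin d => ℝ) i).const_mul (θ i)
  have hfmeas : Measurable f := by fun_prop
  have hρmeas : Measurable (fun x => ENNReal.ofReal (f x)) :=
    ENNReal.measurable_ofReal.comp hfmeas
  have hPQ : mixGPi d θ = (stdGaussianPi d).withDensity (fun x => ENNReal.ofReal (f x)) :=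
    aux_mixGPi_eq_withDensity d θ
  have hrn : (mixGPi d θ).rnDeriv (stdGaussianPi d) =ᵐ[stdGaussianPi d]
      fun x => ENNReal.ofReal (f x) := by
    rw [hPQ]
    exact Measure.rnDeriv_withDensity _ hρmeas
  -- pointwise expansion of f^2
  have hpt : ∀ x, f x ^ 2
      = Real.exp (-t) / 4 * Real.exp (∑ i, 2 * θ i * x i)
        + (Real.exp (-t) / 4 * Real.exp (∑ i, -2 * θ i * x i) + Real.exp (-t) / 2) := by
    intro x
    have h2u : (∑ i, 2 * θ i * x i) = u x + u x := by
      rw [hu, ← Finset.sum_add_distrib]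
      exact Finset.sum_congr rfl fun i _ => by ring
    have h2u' : (∑ i, -2 * θ i * x i) = -u x + -u x := by
      have hneg : (∑ i, -2 * θ i * x i) = -∑ i, 2 * θ i * x i := by
        rw [← Finset.sum_neg_distrib]
        exact Finset.sum_congr rfl fun i _ => by ring
      rw [hneg, h2u]; ring
    have het : Real.exp (-t) = Real.exp (-t / 2) * Real.exp (-t / 2) := by
      rw [← Real.exp_add]; ring_nf
    have e4 : Real.exp (u x) * Real.exp (-u x) = 1 := by
      rw [← Real.exp_add]; simp
    simp only [hf]
    rw [h2u, h2u', Real.cosh_eq, het, Real.exp_add, Real.exp_add]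
    linear_combination (Real.exp (-t / 2) * Real.exp (-t / 2) / 2) * e4
  -- integrability of the pieces
  have hint1 : Integrable (fun x => Real.exp (-t) / 4 * Real.exp (∑ i, 2 * θ i * x i))
      (stdGaussianPi d) := (aux_integrable_exp_sum_pi d fun i => 2 * θ i).const_mul _
  have hint2 : Integrable (fun x => Real.exp (-t) / 4 * Real.exp (∑ i, -2 * θ i * x i))
      (stdGaussianPi d) := (aux_integrable_exp_sum_pi d fun i => -2 * θ i).const_mul _
  have hint3 : Integrable (fun _ : Fin d → ℝ => Real.exp (-t) / 2) (stdGaussianPi d) :=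
    integrable_const _
  have hIsq : Integrable (fun x => f x ^ 2) (stdGaussianPi d) := by
    have h : (fun x => f x ^ 2) = fun x =>
        Real.exp (-t) / 4 * Real.exp (∑ i, 2 * θ i * x i)
          + (Real.exp (-t) / 4 * Real.exp (∑ i, -2 * θ i * x i) + Real.exp (-t) / 2) :=
      funext hpt
    rw [h]
    exact hint1.add (hint2.add hint3)
  -- the chi-squared integral equals cosh t
  have hsum2 : (∑ i, (2 * θ i) ^ 2) / 2 = 2 * t := by
    rw [Finset.sum_congr rfl fun i _ => show (2 * θ i) ^ 2 = 4 * θ i ^ 2 from by ring,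
      ← Finset.mul_sum, ht]
    ring
  have hsum2' : (∑ i, (-2 * θ i) ^ 2) / 2 = 2 * t := by
    rw [Finset.sum_congr rfl fun i _ => show (-2 * θ i) ^ 2 = 4 * θ i ^ 2 from by ring,
      ← Finset.mul_sum, ht]
    ring
  have hint23 : Integrable (fun x => Real.exp (-t) / 4 * Real.exp (∑ i, -2 * θ i * x i)
      + Real.exp (-t) / 2) (stdGaussianPi d) := hint2.add hint3
  have hIsqInt : ∫ x, f x ^ 2 ∂stdGaussianPi d = Real.cosh t := by
    simp_rw [hpt]
    rw [integral_add hint1 hint23, integral_add hint2 hint3,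
      integral_const_mul, integral_const_mul,
      aux_integral_exp_sum_pi d (fun i => 2 * θ i),
      aux_integral_exp_sum_pi d (fun i => -2 * θ i), hsum2, hsum2',
      integral_const, probReal_univ, one_smul]
    have hrel : Real.exp (-t) * Real.exp (2 * t) = Real.exp t := by
      rw [← Real.exp_add]; ring_nf
    rw [Real.cosh_eq]
    linear_combination (1 / 2 : ℝ) * hrel
  -- the chi-squared part
  have hchiInt : ∫ x, ((mixGPi d θ).rnDeriv (stdGaussianPi d) x).toReal ^ 2 ∂stdGaussianPi d
      = ∫ x, f x ^ 2 ∂stdGaussianPi d :=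
    integral_congr_ae (hrn.mono fun x hx => by
      simp only [hx, ENNReal.toReal_ofReal (hfpos x).le])
  refine ⟨by rw [chiSqDiv, hchiInt, hIsqInt], ?_⟩
  -- the KL part
  have hac : mixGPi d θ ≪ stdGaussianPi d := by
    rw [hPQ]; exact withDensity_absolutelyContinuous _ _
  have hrnP : (fun x => ((mixGPi d θ).rnDeriv (stdGaussianPi d) x).toReal) =ᵐ[mixGPi d θ] f :=
    hac.ae_eq (hrn.mono fun x hx => by
      simp only [hx, ENNReal.toReal_ofReal (hfpos x).le])
  have hklEq : klDivR (mixGPi d θ) (stdGaussianPi d) = ∫ x, Real.log (f x) ∂mixGPi d θ := by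
    rw [klDivR]
    exact integral_congr_ae (hrnP.mono fun x hx => by simp only [hx])
  haveI hPprob : IsProbabilityMeasure (mixGPi d θ) := by
    have hm1 : Measurable (fun z : Fin d → ℝ => z - θ) :=
      measurable_pi_lambda _ fun i => (measurable_pi_apply i).sub measurable_const
    have hm2 : Measurable (fun z : Fin d → ℝ => z + θ) :=
      measurable_pi_lambda _ fun i => (measurable_pi_apply (X := fun _ : Fin d => ℝ) i).add_const (θ i)
    haveI i1 : IsProbabilityMeasure ((stdGaussianPi d).map (fun z => z - θ)) :=
      Measure.isProbabilityMeasure_map hm1.aemeasurable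
    haveI i2 : IsProbabilityMeasure ((stdGaussianPi d).map (fun z => z + θ)) :=
      Measure.isProbabilityMeasure_map hm2.aemeasurable
    constructor
    rw [mixGPi]
    simp only [Measure.coe_add, Measure.coe_smul, Pi.add_apply, Pi.smul_apply,
      measure_univ, smul_eq_mul, mul_one]
    exact ENNReal.add_halves 1
  have hcoe : (fun x => ENNReal.ofReal (f x))
      = fun x => ((Real.toNNReal (f x) : ℝ≥0) : ℝ≥0∞) := rfl
  have hsmul : (fun x => (Real.toNNReal (f x)) • f x) = fun x => f x ^ 2 := by
    funext x
    rw [NNReal.smul_def, smul_eq_mul, Real.coe_toNNReal _ (hfpos x).le, sq]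
  have hfint : ∫ x, f x ∂mixGPi d θ = Real.cosh t := by
    rw [hPQ, hcoe, integral_withDensity_eq_integral_smul hfmeas.real_toNNReal, hsmul, hIsqInt]
  have hfintP : Integrable f (mixGPi d θ) := by
    rw [hPQ, hcoe]
    rw [integrable_withDensity_iff_integrable_smul hfmeas.real_toNNReal, hsmul]
    exact hIsq
  rw [hklEq]
  have hCpos : 0 < Real.cosh t := Real.cosh_pos t
  by_cases hLint : Integrable (fun x => Real.log (f x)) (mixGPi d θ)
  · have hbound : ∀ x, Real.log (f x)
        ≤ (Real.log (Real.cosh t) - 1) + f x / Real.cosh t := by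
      intro x
      have hdiv : 0 < f x / Real.cosh t := div_pos (hfpos x) hCpos
      have h1 := Real.log_le_sub_one_of_pos hdiv
      rw [Real.log_div (hfpos x).ne' hCpos.ne'] at h1
      linarith
    have hintR : Integrable (fun x => (Real.log (Real.cosh t) - 1) + f x / Real.cosh t)
        (mixGPi d θ) := (integrable_const _).add (hfintP.div_const _)
    calc ∫ x, Real.log (f x) ∂mixGPi d θ
        ≤ ∫ x, ((Real.log (Real.cosh t) - 1) + f x / Real.cosh t) ∂mixGPi d θ :=
          integral_mono hLint hintR hbound
      _ = (Real.log (Real.cosh t) - 1) + (∫ x, f x ∂mixGPi d θ) / Real.cosh t := by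
          rw [integral_add (integrable_const _) (hfintP.div_const _), integral_const,
            probReal_univ, one_smul, integral_div]
      _ = Real.log (Real.cosh t) := by
          rw [hfint, div_self hCpos.ne']
          ring
  · rw [integral_undef hLint]
    exact Real.log_nonneg (Real.one_le_cosh t)
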